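/- Let F : 𝒜 → ℬ be a triangle functor between triangulated categories. Then the following are equivalent: (1) F satisfies condition (SM); (2) F is objective and the Verdier quotient functor V_F : 𝒜 → 𝒜/Ker F is full; (3) there is an equivalence Φ : 𝒜/ker(F) → 𝒜/Ker(F) such that V_F = Φ ∘ π_F, where π_F : 𝒜 → 𝒜/ker(F) is the projection onto the factor category of 𝒜 by the ideal ker(F) of morphisms annihilated by F; (4) F = F₂ ∘ F₁ where F₁ is a full and dense triangle functor and F₂ is a faithful triangle functor. -/

import Mathlib

universe v u v' u' v'' u''

open CategoryTheory Limits Pretriangulated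

section CatPreamble

variable {𝒜 : Type u} [Category.{v} 𝒜] {ℬ : Type u'} [Category.{v'} ℬ]

/-- An additive functor is objective if every morphism killed by `F` factors through an
object killed by `F`. -/
def ObjectiveFunctor [Limits.HasZeroMorphisms ℬ] (F : 𝒜 ⥤ ℬ) : Prop :=
  ∀ ⦃X Y : 𝒜⦄ (f : X ⟶ Y), F.map f = 0 →
    ∃ (K : 𝒜) (g : X ⟶ K) (h : K ⟶ Y), Limits.IsZero (F.obj K) ∧ g ≫ h = f

/-- Condition (WSM). -/
def CondWSM (F : 𝒜 ⥤ ℬ) : Prop :=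
  ∀ ⦃X Y : 𝒜⦄ (u : X ⟶ Y), IsSplitMono (F.map u) →
    ∃ (X' : 𝒜) (u' : Y ⟶ X'), IsIso (F.map (u ≫ u'))

/-- Condition (I). -/
def CondI (F : 𝒜 ⥤ ℬ) : Prop :=
  ∀ ⦃X Y : 𝒜⦄ (u : X ⟶ Y) (_ : IsIso (F.map u)),
    ∃ u' : Y ⟶ X, F.map u' = CategoryTheory.inv (F.map u)

/-- Condition (SM). -/
def CondSM (F : 𝒜 ⥤ ℬ) : Prop :=
  ∀ ⦃X Y : 𝒜⦄ (u : X ⟶ Y), IsSplitMono (F.map u) →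
    ∃ u' : Y ⟶ X, F.map (u ≫ u') = 𝟙 (F.obj X)

variable (𝒜) in
/-- Iterated composition of an endomorphism. -/
def compPow {X : 𝒜} (f : X ⟶ X) : ℕ → (X ⟶ X)
  | 0 => 𝟙 X
  | n + 1 => f ≫ compPow f n

variable (𝒜) in
/-- A Fitting category: every endomorphism decomposes as an automorphism plus a
nilpotent endomorphism along a direct sum decomposition of the object. -/
def IsFittingCategory [Preadditive 𝒜] : Prop :=
  ∀ (X : 𝒜) (a : X ⟶ X),
    ∃ (X' X'' : 𝒜) (i' : X' ⟶ X) (p' : X ⟶ X') (i'' : X'' ⟶ X) (p'' : X ⟶ X''),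
      i' ≫ p' = 𝟙 X' ∧ i'' ≫ p'' = 𝟙 X'' ∧ i' ≫ p'' = 0 ∧ i'' ≫ p' = 0 ∧
      p' ≫ i' + p'' ≫ i'' = 𝟙 X ∧
      i' ≫ a ≫ p'' = 0 ∧ i'' ≫ a ≫ p' = 0 ∧
      IsIso (i' ≫ a ≫ p') ∧ ∃ n : ℕ, compPow 𝒜 (i'' ≫ a ≫ p'') (n + 1) = 0

section Triangulated

variable [HasZeroObject 𝒜] [Preadditive 𝒜] [HasShift 𝒜 ℤ]
  [∀ n : ℤ, (shiftFunctor 𝒜 n).Additive] [Pretriangulated 𝒜]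
  [HasZeroObject ℬ] [Preadditive ℬ] [HasShift ℬ ℤ]
  [∀ n : ℤ, (shiftFunctor ℬ n).Additive] [Pretriangulated ℬ]

/-- The class of morphisms of `𝒜` whose cone is killed by `F`; the Verdier quotient of
`𝒜` by `Ker F` is the localization of `𝒜` at this class. -/
def kerW (F : 𝒜 ⥤ ℬ) : MorphismProperty 𝒜 := fun X Y f =>
  ∃ (Z : 𝒜) (g : Y ⟶ Z) (h : Z ⟶ X⟦(1 : ℤ)⟧),
    (Triangle.mk f g h ∈ distTriang 𝒜) ∧ IsZero (F.obj Z)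

end Triangulated

end CatPreamble

/-- The ideal `ker(F)` of morphisms killed by `F`, as a `HomRel`: two morphisms are
identified iff their images under `F` agree.  The corresponding quotient category is
the factor category `𝒜/ker(F)`. -/
def kerHomRel {𝒜 : Type u} [Category.{v} 𝒜] {ℬ : Type u'} [Category.{v'} ℬ]
    (F : 𝒜 ⥤ ℬ) : HomRel 𝒜 :=
  fun {X Y} (f g : X ⟶ Y) => F.map f = F.map g


section StmtThirteenAux

section

set_option linter.unusedSectionVars false

variable {𝒜 : Type u} [Category.{v} 𝒜] {ℬ : Type u'} [Category.{v'} ℬ]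
variable [HasZeroObject 𝒜] [Preadditive 𝒜] [HasShift 𝒜 ℤ]
  [∀ n : ℤ, (shiftFunctor 𝒜 n).Additive] [Pretriangulated 𝒜]
  [HasZeroObject ℬ] [Preadditive ℬ] [HasShift ℬ ℤ]
  [∀ n : ℤ, (shiftFunctor ℬ n).Additive] [Pretriangulated ℬ]
variable (F : 𝒜 ⥤ ℬ) [F.Additive] [F.CommShift ℤ] [F.IsTriangulated]

lemma isZero_F_shift {K : 𝒜} (h : IsZero (F.obj K)) (n : ℤ) : IsZero (F.obj (K⟦n⟧)) :=
  IsZero.of_iso ((shiftFunctor ℬ n).map_isZero h) ((F.commShiftIso n).app K)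

lemma kerW_iff_isIso {X Y : 𝒜} (f : X ⟶ Y) : kerW F f ↔ IsIso (F.map f) := by
  constructor
  · rintro ⟨Z, g, h, hT, hZ⟩
    exact (Triangle.isZero₃_iff_isIso₁ _ (F.map_distinguished _ hT)).1 hZ
  · intro hf
    obtain ⟨Z, g, h, hT⟩ := distinguished_cocone_triangle f
    exact ⟨Z, g, h, hT, (Triangle.isZero₃_iff_isIso₁ _ (F.map_distinguished _ hT)).2 hf⟩

lemma F_inverts_kerW : (kerW F).IsInvertedBy F :=
  fun _ _ f hf => (kerW_iff_isIso F f).1 hf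

lemma kerW_mor₂_of_isZero₁ {K Y S : 𝒜} {q : K ⟶ Y} {t : Y ⟶ S} {e : S ⟶ K⟦(1:ℤ)⟧}
    (hT : Triangle.mk q t e ∈ distTriang 𝒜) (hK : IsZero (F.obj K)) : kerW F t :=
  ⟨K⟦(1:ℤ)⟧, e, -q⟦(1:ℤ)⟧', rot_of_distTriang _ hT, isZero_F_shift F hK 1⟩

instance kerW_multiplicative : (kerW F).IsMultiplicative where
  id_mem X := (kerW_iff_isIso F _).2 (by rw [F.map_id]; infer_instance)
  comp_mem f g hf hg := by
    rw [kerW_iff_isIso] at hf hg ⊢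
    rw [F.map_comp]
    exact IsIso.comp_isIso

instance kerW_hasLeftCalculusOfFractions : (kerW F).HasLeftCalculusOfFractions where
  exists_leftFraction X Y φ := by
    obtain ⟨Z, g, h, hT, hZ⟩ := φ.hs
    have hT' := inv_rot_of_distTriang _ hT
    set Tir := (Triangle.mk φ.s g h).invRotate with hTir
    obtain ⟨Y', s', h'', hT2⟩ := distinguished_cocone_triangle (Tir.mor₁ ≫ φ.f)
    have hs' : kerW F s' := by
      refine kerW_mor₂_of_isZero₁ F hT2 ?_
      exact isZero_F_shift F hZ (-1)
    obtain ⟨f', hf'₁, _⟩ := complete_distinguished_triangle_morphism Tir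
      (Triangle.mk (Tir.mor₁ ≫ φ.f) s' h'') hT' hT2 (𝟙 _) φ.f (by exact (Category.id_comp _).symm)
    exact ⟨⟨f', s', hs'⟩, hf'₁.symm⟩
  ext X' X Y f₁ f₂ s hs hcomp := by
    obtain ⟨Z, g, h, hT, hZ⟩ := hs
    have hd : s ≫ (f₁ - f₂) = 0 := by
      rw [Preadditive.comp_sub, hcomp, sub_self]
    obtain ⟨q, hq⟩ := Triangle.yoneda_exact₂ _ hT (f₁ - f₂) hd
    obtain ⟨S, t, e, hT2⟩ := distinguished_cocone_triangle q
    refine ⟨S, t, kerW_mor₂_of_isZero₁ F hT2 hZ, ?_⟩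
    have hqt : q ≫ t = 0 := comp_distTriang_mor_zero₁₂ _ hT2
    have : (f₁ - f₂) ≫ t = 0 := by
      rw [hq]
      exact (Category.assoc _ _ _).trans ((congrArg (fun x => (Triangle.mk s g h).mor₂ ≫ x) hqt).trans Limits.comp_zero)
    rw [← sub_eq_zero, ← Preadditive.sub_comp]
    exact this

lemma isIso_shift_map_iff {X Y : ℬ} (m : X ⟶ Y) (a : ℤ) : IsIso (m⟦a⟧') ↔ IsIso m := by
  constructor
  · intro h
    exact isIso_of_reflects_iso m (shiftFunctor ℬ a)
  · intro h
    infer_instance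

lemma F_map_shift_eq {X Y : 𝒜} (f : X ⟶ Y) (a : ℤ) :
    F.map (f⟦a⟧') = (F.commShiftIso a).hom.app X ≫ (F.map f)⟦a⟧' ≫
      (F.commShiftIso a).inv.app Y := by
  have h2 := (F.commShiftIso a).hom.naturality f
  simp only [Functor.comp_obj, Functor.comp_map] at h2
  rw [← Category.assoc, ← h2, Category.assoc, Iso.hom_inv_id_app]
  simp

instance kerW_compatibleWithShift : (kerW F).IsCompatibleWithShift ℤ := by
  constructor
  intro a
  ext X Y f
  have heq := F_map_shift_eq F f a
  have key : IsIso (F.map (f⟦a⟧')) ↔ IsIso (F.map f) := by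
    rw [heq]
    constructor
    · intro h
      rw [← isIso_shift_map_iff (F.map f) a]
      have : (F.map f)⟦a⟧' = (F.commShiftIso a).inv.app X ≫
          (((F.commShiftIso a).hom.app X ≫ (F.map f)⟦a⟧' ≫ (F.commShiftIso a).inv.app Y)) ≫
          (F.commShiftIso a).hom.app Y := by simp
      rw [this]
      infer_instance
    · intro h
      have : IsIso ((F.map f)⟦a⟧') := (isIso_shift_map_iff (F.map f) a).2 h
      infer_instance
  have h1 : (kerW F).inverseImage (shiftFunctor 𝒜 a) f ↔ kerW F (f⟦a⟧') := Iff.rfl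
  rw [h1, kerW_iff_isIso, kerW_iff_isIso, key]

instance kerW_compatibleWithTriangulation : (kerW F).IsCompatibleWithTriangulation := by
  constructor
  intro T₁ T₂ hT₁ hT₂ a b ha hb hcomm
  obtain ⟨c, hc₁, hc₂⟩ := complete_distinguished_triangle_morphism T₁ T₂ hT₁ hT₂ a b hcomm
  refine ⟨c, ?_, hc₁, hc₂⟩
  rw [kerW_iff_isIso]
  have := isIso₃_of_isIso₁₂ (F.mapTriangle.map (Triangle.homMk T₁ T₂ a b c hcomm hc₁ hc₂))
    (F.map_distinguished _ hT₁) (F.map_distinguished _ hT₂)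
    (by exact (kerW_iff_isIso F a).1 ha)
    (by exact (kerW_iff_isIso F b).1 hb)
  exact this

/-- Mock inverses: every morphism in `kerW F` has a two-sided inverse modulo `ker F`. -/
def MockInv : Prop := ∀ ⦃X Y : 𝒜⦄ (s : X ⟶ Y), kerW F s →
  ∃ t : Y ⟶ X, F.map (s ≫ t) = 𝟙 (F.obj X) ∧ F.map (t ≫ s) = 𝟙 (F.obj Y)

lemma mock_of_condSM (h : CondSM F) : MockInv F := by
  intro X Y s hs
  haveI hiso : IsIso (F.map s) := (kerW_iff_isIso F s).1 hs
  obtain ⟨t, ht⟩ := h s inferInstance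
  refine ⟨t, ht, ?_⟩
  rw [F.map_comp] at ht ⊢
  have hinv : F.map t = inv (F.map s) := by
    rw [← IsIso.eq_inv_of_hom_inv_id ht]
  rw [hinv, IsIso.inv_hom_id]

lemma map_eq_of_localization_map_eq {𝒟 : Type u''} [Category.{v''} 𝒟] (V : 𝒜 ⥤ 𝒟)
    [V.IsLocalization (kerW F)] {X Y : 𝒜} (f g : X ⟶ Y) (h : V.map f = V.map g) :
    F.map f = F.map g := by
  let G := Localization.lift F (F_inverts_kerW F) V
  let e : V ⋙ G ≅ F := Localization.fac F (F_inverts_kerW F) V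
  have nf := e.hom.naturality f
  have ng := e.hom.naturality g
  simp only [Functor.comp_map] at nf ng
  have key : e.hom.app X ≫ F.map f = e.hom.app X ≫ F.map g := by
    rw [← nf, ← ng]
    show G.map (V.map f) ≫ _ = G.map (V.map g) ≫ _
    rw [h]
  exact (cancel_epi (e.hom.app X)).1 key

lemma mock_of_full {𝒟 : Type u''} [Category.{v''} 𝒟] (V : 𝒜 ⥤ 𝒟)
    [V.IsLocalization (kerW F)] [V.Full] : MockInv F := by
  intro X Y s hs
  haveI : IsIso (V.map s) := Localization.inverts V (kerW F) s hs
  obtain ⟨t, ht⟩ := V.map_surjective (inv (V.map s))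
  refine ⟨t, ?_, ?_⟩
  · have h1 : V.map (s ≫ t) = V.map (𝟙 X) := by
      rw [V.map_comp, ht, IsIso.hom_inv_id, V.map_id]
    have := map_eq_of_localization_map_eq F V _ _ h1
    rwa [F.map_id] at this
  · have h1 : V.map (t ≫ s) = V.map (𝟙 Y) := by
      rw [V.map_comp, ht, IsIso.inv_hom_id, V.map_id]
    have := map_eq_of_localization_map_eq F V _ _ h1
    rwa [F.map_id] at this

lemma objective_of_condSM (h : CondSM F) : ObjectiveFunctor F := by
  intro X Y f hf
  obtain ⟨Z, g, hh, hT⟩ := distinguished_cocone_triangle f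
  have hTB := F.map_distinguished _ hT
  have hmor1 : (F.mapTriangle.obj (Triangle.mk f g hh)).mor₁ = 0 := by
    show F.map f = 0
    rw [hf]
  obtain ⟨ρ, hρ⟩ := Triangle.yoneda_exact₂ _ hTB (𝟙 (F.obj Y))
    (by rw [hmor1]; exact Limits.zero_comp)
  replace hρ : 𝟙 (F.obj Y) = F.map g ≫ ρ := hρ
  have hsm : IsSplitMono (F.map g) := ⟨⟨⟨ρ, hρ.symm⟩⟩⟩
  obtain ⟨g', hg'⟩ := h g hsm
  obtain ⟨Kc, p, q, hTc⟩ := distinguished_cocone_triangle (g ≫ g')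
  have hKc : IsZero (F.obj Kc) := by
    refine (Triangle.isZero₃_iff_isIso₁ _ (F.map_distinguished _ hTc)).2 ?_
    show IsIso (F.map (g ≫ g'))
    rw [hg']
    infer_instance
  have hfg : f ≫ g = 0 := comp_distTriang_mor_zero₁₂ _ hT
  have hfc : f ≫ (g ≫ g') = 0 := by rw [← Category.assoc, hfg, Limits.zero_comp]
  obtain ⟨φ, hφ⟩ := Triangle.coyoneda_exact₂ _ (inv_rot_of_distTriang _ hTc) f
    (by exact hfc)
  exact ⟨Kc⟦(-1:ℤ)⟧, φ, (Triangle.mk (g ≫ g') p q).invRotate.mor₁,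
    isZero_F_shift F hKc (-1), hφ.symm⟩

lemma respects_ker (hobj : ObjectiveFunctor F) {E : Type*} [Category E] (G : 𝒜 ⥤ E)
    (hG : (kerW F).IsInvertedBy G) ⦃X Y : 𝒜⦄ (f g : X ⟶ Y) (h : F.map f = F.map g) :
    G.map f = G.map g := by
  have hd : F.map (f - g) = 0 := by rw [F.map_sub, h, sub_self]
  obtain ⟨K, p, q, hK, fac⟩ := hobj _ hd
  obtain ⟨S, t, e, hT⟩ := distinguished_cocone_triangle q
  have ht : kerW F t := kerW_mor₂_of_isZero₁ F hT hK
  have hqt : q ≫ t = 0 := comp_distTriang_mor_zero₁₂ _ hT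
  have h0 : (f - g) ≫ t = 0 := by
    rw [← fac, Category.assoc, hqt, Limits.comp_zero]
  have hft : f ≫ t = g ≫ t := by
    rw [← sub_eq_zero, ← Preadditive.sub_comp]
    exact h0
  have key : G.map f ≫ G.map t = G.map g ≫ G.map t := by
    rw [← G.map_comp, ← G.map_comp, hft]
  haveI := hG t ht
  exact (cancel_mono (G.map t)).1 key

/-- The key trick: objectivity plus mock inverses imply condition (SM). -/
lemma condSM_of_objective_of_mock (hobj : ObjectiveFunctor F) (hmock : MockInv F) :
    CondSM F := by
  intro X Y u hu
  obtain ⟨Z, v, w, hT⟩ := distinguished_cocone_triangle u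
  set T := Triangle.mk u v w with hTdef
  have hTB := F.map_distinguished _ hT
  have h31 := comp_distTriang_mor_zero₃₁ _ hTB
  haveI hsm1 : IsSplitMono ((F.mapTriangle.obj T).mor₁) := hu
  haveI : Mono (((F.mapTriangle.obj T).mor₁)⟦(1:ℤ)⟧') := by
    haveI : IsSplitMono (((F.mapTriangle.obj T).mor₁)⟦(1:ℤ)⟧') := inferInstance
    infer_instance
  have h3 : (F.mapTriangle.obj T).mor₃ = 0 := by
    rw [← cancel_mono (((F.mapTriangle.obj T).mor₁)⟦(1:ℤ)⟧'), h31, Limits.zero_comp]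
  have hw : F.map w = 0 := by
    have h3' : F.map w ≫ (F.commShiftIso (1:ℤ)).hom.app X = 0 := h3
    have := h3' =≫ (F.commShiftIso (1:ℤ)).inv.app X
    simpa using this
  obtain ⟨K, α, β, hK, fac⟩ := hobj w hw
  obtain ⟨M, j, k, hTM⟩ := distinguished_cocone_triangle₂ β
  set TM := Triangle.mk j k β with hTMdef
  have hjW : kerW F j := by
    rw [kerW_iff_isIso]
    have hKzero : IsZero ((F.mapTriangle.obj TM).obj₃) := hK
    exact (Triangle.isZero₃_iff_isIso₁ _ (F.map_distinguished _ hTM)).1 hKzero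
  obtain ⟨j', hj'1, _⟩ := hmock j hjW
  obtain ⟨c, hc1, _⟩ := complete_distinguished_triangle_morphism (T.rotate.rotate)
    (TM.rotate.rotate)
    (rot_of_distTriang _ (rot_of_distTriang _ hT))
    (rot_of_distTriang _ (rot_of_distTriang _ hTM))
    α (𝟙 _) (by exact (Category.comp_id _).trans fac.symm)
  have hc1' : u⟦(1:ℤ)⟧' ≫ c = j⟦(1:ℤ)⟧' := by
    exact neg_injective ((Preadditive.neg_comp _ _).symm.trans (hc1.trans (Category.id_comp _)))
  set e := (shiftFunctor 𝒜 (1:ℤ)).preimage c with hedef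
  have he : u ≫ e = j := by
    apply (shiftFunctor 𝒜 (1:ℤ)).map_injective
    have h' : (shiftFunctor 𝒜 (1:ℤ)).map e = c := Functor.map_preimage _ _
    exact (Functor.map_comp _ _ _).trans ((congrArg (fun x => u⟦(1:ℤ)⟧' ≫ x) h').trans hc1')
  refine ⟨e ≫ j', ?_⟩
  rw [show u ≫ e ≫ j' = (u ≫ e) ≫ j' from (Category.assoc _ _ _).symm, he]
  exact hj'1

instance kerHomRel_congruence : Congruence (kerHomRel F) where
  equivalence := ⟨fun _ => rfl, Eq.symm, Eq.trans⟩
  comp_left := by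
    intro X Y Z f g g' hg
    have hg' : F.map g = F.map g' := hg
    show F.map _ = F.map _
    rw [F.map_comp, F.map_comp, hg']
  comp_right := by
    intro X Y Z f f' g hf
    have hf' : F.map f = F.map f' := hf
    show F.map _ = F.map _
    rw [F.map_comp, F.map_comp, hf']

instance kerHomRel_compatibleWithShift : (kerHomRel F).IsCompatibleWithShift ℤ := by
  constructor
  intro a X Y f g h
  show F.map _ = F.map _
  rw [F_map_shift_eq F f a, F_map_shift_eq F g a]
  have hfg : F.map f = F.map g := h
  rw [hfg]

/-- The strict universal property of the quotient functor, assuming objectivity and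
mock inverses. -/
def kerStrictUniv (hobj : ObjectiveFunctor F) (hmock : MockInv F) (E : Type*) [Category E] :
    Localization.StrictUniversalPropertyFixedTarget
      (CategoryTheory.Quotient.functor (kerHomRel F)) (kerW F) E where
  inverts := by
    intro X Y s hs
    obtain ⟨t, h1, h2⟩ := hmock s hs
    refine ⟨⟨(CategoryTheory.Quotient.functor (kerHomRel F)).map t, ?_, ?_⟩⟩
    · rw [← Functor.map_comp, ← (CategoryTheory.Quotient.functor (kerHomRel F)).map_id]
      exact CategoryTheory.Quotient.sound _ (show F.map _ = F.map _ by rw [h1, F.map_id])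
    · rw [← Functor.map_comp, ← (CategoryTheory.Quotient.functor (kerHomRel F)).map_id]
      exact CategoryTheory.Quotient.sound _ (show F.map _ = F.map _ by rw [h2, F.map_id])
  lift G hG := CategoryTheory.Quotient.lift _ G (fun _ _ f g hr => respects_ker F hobj G hG f g hr)
  fac G hG := CategoryTheory.Quotient.lift_spec _ _ _
  uniq F₁ F₂ h := CategoryTheory.Quotient.lift_unique' _ _ _ h

lemma isLocalization_quotient (hobj : ObjectiveFunctor F) (hmock : MockInv F) :
    (CategoryTheory.Quotient.functor (kerHomRel F)).IsLocalization (kerW F) :=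
  Functor.IsLocalization.mk' _ _ (kerStrictUniv F hobj hmock _) (kerStrictUniv F hobj hmock _)

lemma objective_of_isLocalization
    (hloc : (CategoryTheory.Quotient.functor (kerHomRel F)).IsLocalization (kerW F)) :
    ObjectiveFunctor F := by
  haveI := hloc
  intro X Y f hf
  have hq : (CategoryTheory.Quotient.functor (kerHomRel F)).map f = (CategoryTheory.Quotient.functor (kerHomRel F)).map 0 :=
    CategoryTheory.Quotient.sound _ (show F.map f = F.map 0 by rw [hf, F.map_zero])
  obtain ⟨Z, s, hs, fac⟩ := (MorphismProperty.map_eq_iff_postcomp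
    (CategoryTheory.Quotient.functor (kerHomRel F)) (kerW F) f 0).1 hq
  rw [Limits.zero_comp] at fac
  obtain ⟨Zc, g2, h2, hT, hZ⟩ := hs
  obtain ⟨φ, hφ⟩ := Triangle.coyoneda_exact₂ _ (inv_rot_of_distTriang _ hT) f
    (by exact fac)
  exact ⟨Zc⟦(-1:ℤ)⟧, φ, (Triangle.mk s g2 h2).invRotate.mor₁,
    isZero_F_shift F hZ (-1), hφ.symm⟩

section Directions

variable {𝒟 : Type u''} [Category.{v''} 𝒟] (V : 𝒜 ⥤ 𝒟) [V.IsLocalization (kerW F)]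

lemma dir_1_2 (h1 : CondSM F) : ObjectiveFunctor F ∧ V.Full := by
  have hobj := objective_of_condSM F h1
  have hmock := mock_of_condSM F h1
  haveI hloc := isLocalization_quotient F hobj hmock
  refine ⟨hobj, ?_⟩
  exact Functor.Full.of_iso
    (Localization.compUniqFunctor (CategoryTheory.Quotient.functor (kerHomRel F)) V (kerW F))

lemma dir_2_1 (h2 : ObjectiveFunctor F ∧ V.Full) : CondSM F := by
  haveI := h2.2
  exact condSM_of_objective_of_mock F h2.1 (mock_of_full F V)

lemma dir_1_3 (h1 : CondSM F) :
    ∃ Φ : CategoryTheory.Quotient (kerHomRel F) ⥤ 𝒟,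
      Φ.IsEquivalence ∧ CategoryTheory.Quotient.functor (kerHomRel F) ⋙ Φ = V := by
  have hobj := objective_of_condSM F h1
  have hmock := mock_of_condSM F h1
  haveI hloc := isLocalization_quotient F hobj hmock
  have hresp := fun a b (f g : a ⟶ b) hr =>
    respects_ker F hobj V (Localization.inverts V (kerW F)) f g hr
  refine ⟨CategoryTheory.Quotient.lift _ V hresp, ?_, CategoryTheory.Quotient.lift_spec _ _ _⟩
  let E := Localization.uniq (CategoryTheory.Quotient.functor (kerHomRel F)) V (kerW F)
  have τ : CategoryTheory.Quotient.functor (kerHomRel F) ⋙ CategoryTheory.Quotient.lift _ V hresp ≅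
      CategoryTheory.Quotient.functor (kerHomRel F) ⋙ E.functor :=
    eqToIso (CategoryTheory.Quotient.lift_spec _ _ _) ≪≫
      (Localization.compUniqFunctor (CategoryTheory.Quotient.functor (kerHomRel F)) V (kerW F)).symm
  exact Functor.isEquivalence_of_iso (CategoryTheory.Quotient.natIsoLift _ τ).symm

lemma dir_3_1
    (h3 : ∃ Φ : CategoryTheory.Quotient (kerHomRel F) ⥤ 𝒟,
      Φ.IsEquivalence ∧ CategoryTheory.Quotient.functor (kerHomRel F) ⋙ Φ = V) :
    CondSM F := by
  obtain ⟨Φ, hΦ, hfac⟩ := h3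
  haveI := hΦ
  haveI hloc : (CategoryTheory.Quotient.functor (kerHomRel F)).IsLocalization (kerW F) := by
    refine Functor.IsLocalization.of_equivalence_target V (kerW F) _
      Φ.asEquivalence.symm ?_
    have e1 : V ⋙ Φ.asEquivalence.symm.functor =
        (CategoryTheory.Quotient.functor (kerHomRel F) ⋙ Φ) ⋙ Φ.asEquivalence.inverse := by
      rw [hfac]
      rfl
    refine eqToIso e1 ≪≫ Functor.associator _ _ _ ≪≫ ?_
    exact Functor.isoWhiskerLeft (CategoryTheory.Quotient.functor (kerHomRel F)) Φ.asEquivalence.unitIso.symm ≪≫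
      (CategoryTheory.Quotient.functor (kerHomRel F)).rightUnitor
  have hobj := objective_of_isLocalization F hloc
  haveI := hloc
  have hmock := mock_of_full F (CategoryTheory.Quotient.functor (kerHomRel F))
  exact condSM_of_objective_of_mock F hobj hmock

lemma dir_1_4 (h1 : CondSM F) :
    ∃ (𝒞 : Type u) (_ : Category.{v} 𝒞) (_ : HasZeroObject 𝒞) (_ : Preadditive 𝒞)
      (_ : HasShift 𝒞 ℤ) (_ : ∀ n : ℤ, (CategoryTheory.shiftFunctor 𝒞 n).Additive)
      (_ : Pretriangulated 𝒞)
      (F₁ : 𝒜 ⥤ 𝒞) (F₂ : 𝒞 ⥤ ℬ)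
      (_ : F₁.Additive) (_ : F₁.CommShift ℤ) (_ : F₁.IsTriangulated)
      (_ : F₂.Additive) (_ : F₂.CommShift ℤ) (_ : F₂.IsTriangulated),
      F₁.Full ∧ F₁.EssSurj ∧ F₂.Faithful ∧ F₁ ⋙ F₂ = F := by
  have hobj := objective_of_condSM F h1
  have hmock := mock_of_condSM F h1
  haveI hloc := isLocalization_quotient F hobj hmock
  letI : Preadditive (CategoryTheory.Quotient (kerHomRel F)) :=
    Localization.preadditive (CategoryTheory.Quotient.functor (kerHomRel F)) (kerW F)
  haveI : (CategoryTheory.Quotient.functor (kerHomRel F)).Additive :=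
    Localization.functor_additive (CategoryTheory.Quotient.functor (kerHomRel F)) (kerW F)
  haveI : HasZeroObject (CategoryTheory.Quotient (kerHomRel F)) :=
    (CategoryTheory.Quotient.functor (kerHomRel F)).hasZeroObject_of_additive
  haveI hsha : ∀ n : ℤ, (shiftFunctor (CategoryTheory.Quotient (kerHomRel F)) n).Additive := by
    intro n
    rw [Localization.functor_additive_iff (CategoryTheory.Quotient.functor (kerHomRel F)) (kerW F)]
    exact Functor.additive_of_iso ((CategoryTheory.Quotient.functor (kerHomRel F)).commShiftIso n)
  letI : Pretriangulated (CategoryTheory.Quotient (kerHomRel F)) :=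
    Triangulated.Localization.pretriangulated (CategoryTheory.Quotient.functor (kerHomRel F)) (kerW F)
  haveI : (CategoryTheory.Quotient.functor (kerHomRel F)).IsTriangulated :=
    Triangulated.Localization.isTriangulated_functor (CategoryTheory.Quotient.functor (kerHomRel F)) (kerW F)
  haveI : (CategoryTheory.Quotient.functor (kerHomRel F)).mapArrow.EssSurj :=
    Localization.essSurj_mapArrow (CategoryTheory.Quotient.functor (kerHomRel F)) (kerW F)
  have hF₂add : (CategoryTheory.Quotient.lift (kerHomRel F) F (fun _ _ _ _ h => h)).Additive := by
    constructor
    intro P Q f g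
    obtain ⟨f₀, rfl⟩ := (CategoryTheory.Quotient.functor (kerHomRel F)).map_surjective f
    obtain ⟨g₀, rfl⟩ := (CategoryTheory.Quotient.functor (kerHomRel F)).map_surjective g
    rw [← Functor.map_add]
    exact F.map_add
  have hF₂faith : (CategoryTheory.Quotient.lift (kerHomRel F) F (fun _ _ _ _ h => h)).Faithful := by
    constructor
    intro P Q f g h
    obtain ⟨f₀, rfl⟩ := (CategoryTheory.Quotient.functor (kerHomRel F)).map_surjective f
    obtain ⟨g₀, rfl⟩ := (CategoryTheory.Quotient.functor (kerHomRel F)).map_surjective g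
    replace h : F.map f₀ = F.map g₀ := h
    exact CategoryTheory.Quotient.sound _ h
  letI := Quotient.liftCommShift F (kerHomRel F) ℤ (fun _ _ _ _ h => h)
  haveI := Quotient.liftCommShift_compatibility F (kerHomRel F) ℤ (fun _ _ _ _ h => h)
  have hF₂tri : (CategoryTheory.Quotient.lift (kerHomRel F) F (fun _ _ _ _ h => h)).IsTriangulated :=
    Functor.isTriangulated_of_precomp_iso
      (CategoryTheory.Quotient.lift.isLift (kerHomRel F) F (fun _ _ _ _ h => h))
  exact ⟨CategoryTheory.Quotient (kerHomRel F), inferInstance, inferInstance, inferInstance,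
    inferInstance, hsha, inferInstance,
    CategoryTheory.Quotient.functor (kerHomRel F), CategoryTheory.Quotient.lift (kerHomRel F) F (fun _ _ _ _ h => h),
    inferInstance, inferInstance, inferInstance,
    hF₂add, inferInstance, hF₂tri,
    inferInstance, inferInstance, hF₂faith, CategoryTheory.Quotient.lift_spec _ _ _⟩

end Directions

end

end StmtThirteenAux

/-- Theorem [RZ2, 1.3]. For a triangle functor `F : 𝒜 → ℬ` with
Verdier quotient functor `V : 𝒜 → 𝒜/Ker F`, the following are equivalent:
(1) `F` satisfies (SM); (2) `F` is objective and `V` is full; (3) there is an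
equivalence `Φ : 𝒜/ker(F) → 𝒜/Ker(F)` with `V = Φ ∘ π_F`; (4) `F = F₂ ∘ F₁` with `F₁`
a full and dense triangle functor and `F₂` a faithful triangle functor. -/
theorem stmt13
    {𝒜 : Type u} [Category.{v} 𝒜] [HasZeroObject 𝒜] [Preadditive 𝒜] [HasShift 𝒜 ℤ]
    [∀ n : ℤ, (CategoryTheory.shiftFunctor 𝒜 n).Additive] [Pretriangulated 𝒜]
    {ℬ : Type u'} [Category.{v'} ℬ] [HasZeroObject ℬ] [Preadditive ℬ] [HasShift ℬ ℤ]
    [∀ n : ℤ, (CategoryTheory.shiftFunctor ℬ n).Additive] [Pretriangulated ℬ]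
    (F : 𝒜 ⥤ ℬ) [F.Additive] [F.CommShift ℤ] [F.IsTriangulated]
    {𝒟 : Type u''} [Category.{v''} 𝒟]
    (V : 𝒜 ⥤ 𝒟) [V.IsLocalization (kerW F)] :
    List.TFAE [
      -- (1)
      CondSM F,
      -- (2)
      ObjectiveFunctor F ∧ V.Full,
      -- (3)
      ∃ Φ : CategoryTheory.Quotient (kerHomRel F) ⥤ 𝒟,
        Φ.IsEquivalence ∧ CategoryTheory.Quotient.functor (kerHomRel F) ⋙ Φ = V,
      -- (4)
      ∃ (𝒞 : Type u) (_ : Category.{v} 𝒞) (_ : HasZeroObject 𝒞) (_ : Preadditive 𝒞)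
        (_ : HasShift 𝒞 ℤ) (_ : ∀ n : ℤ, (CategoryTheory.shiftFunctor 𝒞 n).Additive)
        (_ : Pretriangulated 𝒞)
        (F₁ : 𝒜 ⥤ 𝒞) (F₂ : 𝒞 ⥤ ℬ)
        (_ : F₁.Additive) (_ : F₁.CommShift ℤ) (_ : F₁.IsTriangulated)
        (_ : F₂.Additive) (_ : F₂.CommShift ℤ) (_ : F₂.IsTriangulated),
        F₁.Full ∧ F₁.EssSurj ∧ F₂.Faithful ∧ F₁ ⋙ F₂ = F
    ] := by
  tfae_have 1 → 2 := dir_1_2 F V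
  tfae_have 2 → 1 := dir_2_1 F V
  tfae_have 1 → 3 := dir_1_3 F V
  tfae_have 3 → 1 := dir_3_1 F V
  tfae_have 1 → 4 := dir_1_4 F
  tfae_have 4 → 1 := by
    rintro ⟨𝒞, ic, izo, ipre, ish, isha, iptri, F₁, F₂, ia1, ic1, it1, ia2, ic2, it2,
      hfull, hess, hfaith, hcomp⟩
    letI := ic; letI := izo; letI := ipre; letI := ish; letI := isha; letI := iptri
    letI := ia1; letI := ic1; letI := it1; letI := ia2; letI := ic2; letI := it2
    haveI := hfull; haveI := hfaith
    subst hcomp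
    intro X Y u hu
    obtain ⟨Z, v, w, hT⟩ := distinguished_cocone_triangle u
    have hT1 := F₁.map_distinguished _ hT
    have hT2 := F₂.map_distinguished _ hT1
    haveI hsm : IsSplitMono
        ((F₂.mapTriangle.obj (F₁.mapTriangle.obj (Triangle.mk u v w))).mor₁) := hu
    haveI : Mono
        (((F₂.mapTriangle.obj (F₁.mapTriangle.obj (Triangle.mk u v w))).mor₁)⟦(1:ℤ)⟧') := by
      haveI : IsSplitMono
          (((F₂.mapTriangle.obj (F₁.mapTriangle.obj (Triangle.mk u v w))).mor₁)⟦(1:ℤ)⟧') :=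
        inferInstance
      infer_instance
    have h31 := comp_distTriang_mor_zero₃₁ _ hT2
    have h3 : (F₂.mapTriangle.obj (F₁.mapTriangle.obj (Triangle.mk u v w))).mor₃ = 0 := by
      rw [← cancel_mono
        (((F₂.mapTriangle.obj (F₁.mapTriangle.obj (Triangle.mk u v w))).mor₁)⟦(1:ℤ)⟧'),
        h31, Limits.zero_comp]
    have h3a : F₂.map ((F₁.mapTriangle.obj (Triangle.mk u v w)).mor₃) ≫
        (F₂.commShiftIso (1:ℤ)).hom.app
          ((F₁.mapTriangle.obj (Triangle.mk u v w)).obj₁) = 0 := h3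
    have h3b : F₂.map ((F₁.mapTriangle.obj (Triangle.mk u v w)).mor₃) = 0 := by
      have := h3a =≫ (F₂.commShiftIso (1:ℤ)).inv.app
        ((F₁.mapTriangle.obj (Triangle.mk u v w)).obj₁)
      simpa using this
    have h3c : (F₁.mapTriangle.obj (Triangle.mk u v w)).mor₃ = 0 :=
      F₂.map_injective (by rw [h3b, F₂.map_zero])
    have hw1 : F₁.map w = 0 := by
      have h3d : F₁.map w ≫ (F₁.commShiftIso (1:ℤ)).hom.app X = 0 := h3c
      have := h3d =≫ (F₁.commShiftIso (1:ℤ)).inv.app X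
      simpa using this
    have hm : (F₁.mapTriangle.obj (Triangle.mk u v w)).invRotate.mor₁ = 0 := by
      refine (Triangle.mk_mor₁ _ _ _).trans ?_
      rw [h3c]
      simp
      rfl
    obtain ⟨g, hg⟩ := Triangle.yoneda_exact₂ _ (inv_rot_of_distTriang _ hT1)
      (𝟙 ((F₁.mapTriangle.obj (Triangle.mk u v w)).obj₁))
      (by rw [hm]; exact Limits.zero_comp)
    obtain ⟨u', hu'⟩ := F₁.map_surjective (X := Y) (Y := X) g
    refine ⟨u', ?_⟩
    have h5 : F₁.map u ≫ g = 𝟙 (F₁.obj X) := hg.symm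
    show F₂.map (F₁.map (u ≫ u')) = 𝟙 _
    rw [F₁.map_comp, hu']
    exact (congrArg F₂.map h5).trans (F₂.map_id _)
  tfae_finish
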